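/- arXiv:1703.09025 — 2 statements merged into one kernel-verified Lean document; each statement's English description precedes it below -/
import Mathlib

section
/- Let V be a type, d : V → V → ℝ and w : V → ℝ arbitrary functions, and let s, u ∈ V. Define w' : V → ℝ by w'(v) = w(u) if v = s and w'(v) = w(v) otherwise, and define c' : V → V → ℝ by c' x y = d x y + (w' x + w' y)/2. Then for every duplicate-free list of vertices l = [u₁, u₂, …, uₙ] with n ≥ 2, u₁ = s and uₙ = u, the walk cost of l under c' equals the walk cost of l under d plus the sum ∑_{i=2}^{n} w(uᵢ). -/
/-- The cost of a walk `[v₀, v₁, …, vₙ]` under an edge-cost function `c`,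
namely `∑_{i=0}^{n-1} c vᵢ vᵢ₊₁`. -/
def walkCost {V : Type*} (c : V → V → ℝ) : List V → ℝ
  | a :: b :: l => c a b + walkCost c (b :: l)
  | _ => 0

/-! The edge cost `d x y + (w' x + w' y) / 2` splits the weight of every vertex between its two
incident walk edges. Along a walk `s = u₁, …, uₙ = u` the interior vertices thus pay their full
weight, while the endpoints pay half each; since `w' s = w u = w' u`, these halves add up to
`w uₙ`. This needs `s ∉ [u₂, …, uₙ]`, so that `w'` agrees with `w` there. -/

section

variable {V : Type*}

lemma walkCost_add (c e : V → V → ℝ) :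
    ∀ l : List V, walkCost (fun x y => c x y + e x y) l = walkCost c l + walkCost e l
  | [] | [_] => by simp [walkCost]
  | a :: b :: t => by
    rw [walkCost, walkCost, walkCost, walkCost_add c e (b :: t)]
    ring

lemma walkCost_avg (f : V → ℝ) :
    ∀ (a : V) (l : List V), walkCost (fun x y => (f x + f y) / 2) (a :: l)
      = (l.map f).sum + (f a - f ((a :: l).getLast (List.cons_ne_nil a l))) / 2
  | a, [] => by simp [walkCost]
  | a, b :: t => by
    rw [walkCost, walkCost_avg f b t, List.getLast_cons (List.cons_ne_nil b t),
      List.map_cons, List.sum_cons]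
    ring

end

theorem walkCost_nodup_walk_source_weight_replaced_general {V : Type*} [DecidableEq V]
    (d : V → V → ℝ) (w : V → ℝ) (s u : V)
    (w' : V → ℝ) (hw' : ∀ v, w' v = if v = s then w u else w v)
    (c' : V → V → ℝ) (hc' : ∀ x y, c' x y = d x y + (w' x + w' y) / 2)
    (l : List V) (hnd : l.Nodup)
    (hhead : l.head? = some s) (hlast : l.getLast? = some u) :
    walkCost c' l = walkCost d l + ((l.drop 1).map w).sum := by
  obtain ⟨t, rfl⟩ := List.head?_eq_some_iff.mp hhead
  have hu : (s :: t).getLast (List.cons_ne_nil s t) = u := by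
    rwa [List.getLast?_eq_some_getLast (List.cons_ne_nil s t), Option.some_inj] at hlast
  have hs : s ∉ t := (List.nodup_cons.mp hnd).1
  have hw's : w' s = w u := by rw [hw', if_pos rfl]
  have hw'u : w' u = w u := by rw [hw']; split_ifs with h <;> simp [h]
  have hmap : t.map w' = t.map w :=
    List.map_congr_left fun x hx => by rw [hw', if_neg (ne_of_mem_of_not_mem hx hs)]
  have hc : c' = fun x y => d x y + (w' x + w' y) / 2 := funext₂ hc'
  rw [hc, walkCost_add, walkCost_avg, hu, hw's, hw'u, hmap, sub_self, zero_div, add_zero,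
    List.drop_one, List.tail_cons]

theorem walkCost_nodup_walk_source_weight_replaced {V : Type*} [DecidableEq V]
    (d : V → V → ℝ) (w : V → ℝ) (s u : V)
    (w' : V → ℝ) (hw' : ∀ v, w' v = if v = s then w u else w v)
    (c' : V → V → ℝ) (hc' : ∀ x y, c' x y = d x y + (w' x + w' y) / 2)
    (l : List V) (hnd : l.Nodup) (hl : 2 ≤ l.length)
    (hhead : l.head? = some s) (hlast : l.getLast? = some u) :
    walkCost c' l = walkCost d l + ((l.drop 1).map w).sum :=
  walkCost_nodup_walk_source_weight_replaced_general d w s u w' hw' c' hc' l hnd hhead hlast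
end

section
/- Let V be a type and c : V → V → ℝ a function satisfying the triangle inequality (c a c' ≤ c a b + c b c' for all a, b, c' ∈ V). Let s, u ∈ V with s ≠ u, let k ≥ 2 be a natural number, and let l be a list of vertices whose first entry is s, whose last entry is u, and which contains at least k distinct vertices. Then there exists a duplicate-free list l' of exactly k vertices whose first entry is s, whose last entry is u, each of whose entries occurs in l, and whose walk cost under c is at most the walk cost of l under c. -/
lemma walkCost_cons' {V : Type*} (c : V → V → ℝ) (x y : V) (L : List V) :
    walkCost c (x :: y :: L) = c x y + walkCost c (y :: L) := rfl

lemma walkCost_remove_mid {V : Type*} (c : V → V → ℝ)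
    (hc : ∀ a b c', c a c' ≤ c a b + c b c') :
    ∀ (p : List V) (a b d : V) (t : List V),
      walkCost c (p ++ a :: d :: t) ≤ walkCost c (p ++ a :: b :: d :: t)
  | [], a, b, d, t => by
    simp only [List.nil_append, walkCost_cons']
    have := hc a b d
    linarith
  | [x], a, b, d, t => by
    simp only [List.cons_append, List.nil_append, walkCost_cons']
    have := walkCost_remove_mid c hc [] a b d t
    simp only [List.nil_append, walkCost_cons'] at this
    linarith
  | x :: y :: p, a, b, d, t => by
    simp only [List.cons_append, walkCost_cons']
    have := walkCost_remove_mid c hc (y :: p) a b d t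
    simp only [List.cons_append, walkCost_cons'] at this
    linarith

/-- Removing an interior vertex from a walk does not increase the cost. -/
lemma walkCost_remove_interior {V : Type*} (c : V → V → ℝ)
    (hc : ∀ a b c', c a c' ≤ c a b + c b c')
    (p : List V) (hp : p ≠ []) (b : V) (q : List V) (hq : q ≠ []) :
    walkCost c (p ++ q) ≤ walkCost c (p ++ b :: q) := by
  obtain ⟨p', a, rfl⟩ := p.eq_nil_or_concat.resolve_left hp
  obtain ⟨d, t, rfl⟩ : ∃ d t, q = d :: t := by
    cases q with
    | nil => exact absurd rfl hq
    | cons d t => exact ⟨d, t, rfl⟩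
  have := walkCost_remove_mid c hc p' a b d t
  simpa using this

theorem exists_nodup_subwalk_of_card_le {V : Type*} [DecidableEq V] (c : V → V → ℝ)
    (hc : ∀ a b c', c a c' ≤ c a b + c b c')
    (s u : V) (hsu : s ≠ u) (k : ℕ) (hk : 2 ≤ k)
    (l : List V) (hhead : l.head? = some s) (hlast : l.getLast? = some u)
    (hcard : k ≤ l.toFinset.card) :
    ∃ l' : List V, l'.Nodup ∧ l'.length = k ∧ l'.head? = some s ∧
      l'.getLast? = some u ∧ (∀ v ∈ l', v ∈ l) ∧ walkCost c l' ≤ walkCost c l := by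
  obtain ⟨n, hn⟩ : ∃ n, l.length = n := ⟨_, rfl⟩
  induction n using Nat.strong_induction_on generalizing l with
  | _ n ih =>
    -- a generic step: remove an interior vertex and recurse
    have step : ∀ (P : List V) (x : V) (Q : List V), l = P ++ x :: Q → P ≠ [] → Q ≠ [] →
        k ≤ (P ++ Q).toFinset.card →
        ∃ l' : List V, l'.Nodup ∧ l'.length = k ∧ l'.head? = some s ∧
          l'.getLast? = some u ∧ (∀ v ∈ l', v ∈ l) ∧ walkCost c l' ≤ walkCost c l := by
      intro P x Q heq hP hQ hcard'
      subst heq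
      have hhead' : (P ++ Q).head? = some s := by
        rw [List.head?_append_of_ne_nil _ hP]
        rwa [List.head?_append_of_ne_nil _ hP] at hhead
      have hlast' : (P ++ Q).getLast? = some u := by
        rw [List.getLast?_append_of_ne_nil _ hQ]
        rw [List.getLast?_append_cons] at hlast
        obtain ⟨d, t, rfl⟩ : ∃ d t, Q = d :: t := by
          cases Q with
          | nil => exact absurd rfl hQ
          | cons d t => exact ⟨d, t, rfl⟩
        rwa [List.getLast?_cons_cons] at hlast
      have hlen : (P ++ Q).length < n := by
        simp only [List.length_append, List.length_cons] at hn ⊢; omega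
      obtain ⟨l', h1, h2, h3, h4, h5, h6⟩ :=
        ih _ hlen (P ++ Q) hhead' hlast' hcard' rfl
      refine ⟨l', h1, h2, h3, h4, fun v hv => ?_, ?_⟩
      · have := h5 v hv
        simp only [List.mem_append, List.mem_cons] at this ⊢
        tauto
      · exact le_trans h6 (walkCost_remove_interior c hc P hP x Q hQ)
    by_cases hnd : l.Nodup
    · have hlencard := List.toFinset_card_of_nodup hnd
      rcases eq_or_lt_of_le hcard with heq | hlt
      · exact ⟨l, hnd, by omega, hhead, hlast, fun v hv => hv, le_refl _⟩
      · -- length > k ≥ 2, so length ≥ 3; remove the second vertex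
        have hlen3 : 3 ≤ l.length := by omega
        obtain ⟨a, b, d, t, rfl⟩ : ∃ a b d t, l = a :: b :: d :: t := by
          match l, hlen3 with
          | a :: b :: d :: t, _ => exact ⟨a, b, d, t, rfl⟩
        refine step [a] b (d :: t) rfl (by simp) (by simp) ?_
        have hsub : ([a] ++ d :: t).Sublist (a :: b :: d :: t) := by
          simp only [List.cons_append, List.nil_append]
          exact (List.sublist_cons_self b (d :: t)).cons_cons a
        have hnd' := hnd.sublist hsub
        have h1 : ([a] ++ d :: t).toFinset.card = t.length + 2 := by
          rw [List.toFinset_card_of_nodup hnd']; simp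
        have h2 : (a :: b :: d :: t).length = t.length + 3 := by simp
        omega
    · -- find a duplicated vertex with an interior occurrence
      obtain ⟨x, hx⟩ := (List.exists_duplicate_iff_not_nodup.2 hnd)
      have hx2 : 2 ≤ l.count x := List.duplicate_iff_two_le_count.1 hx
      have hxmem : x ∈ l := hx.mem
      obtain ⟨A, q, rfl⟩ := List.append_of_mem hxmem
      have hxAq : x ∈ A ++ q := by
        by_contra h
        simp only [List.mem_append, not_or] at h
        have hcnt : (A ++ x :: q).count x = 1 := by
          simp [List.count_append, List.count_eq_zero.2 h.1, List.count_eq_zero.2 h.2]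
        omega
      -- get the form l = P ++ x :: Q where x ∈ P ++ Q
      obtain ⟨P, Q, hPQ, hxPQ, hQne⟩ :
          ∃ P Q, A ++ x :: q = P ++ x :: Q ∧ x ∈ P ++ Q ∧ Q ≠ [] := by
        rcases List.mem_append.1 hxAq with h | h
        · obtain ⟨B, C, rfl⟩ := List.append_of_mem h
          exact ⟨B, C ++ x :: q, by simp, by simp, by simp⟩
        · obtain ⟨B, C, rfl⟩ := List.append_of_mem h
          exact ⟨A, B ++ x :: C, by simp, by simp, by simp⟩
      have hcard' : k ≤ (P ++ Q).toFinset.card := by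
        have : (A ++ x :: q).toFinset = (P ++ Q).toFinset := by
          rw [hPQ]
          ext v
          simp only [List.toFinset_append, Finset.mem_union, List.toFinset_cons,
            Finset.mem_insert, List.mem_toFinset]
          constructor
          · rintro (h | rfl | h)
            · tauto
            · simpa [List.mem_toFinset] using (List.mem_append.1 hxPQ)
            · tauto
          · tauto
        rw [← this]; exact hcard
      by_cases hP : P = []
      · -- x is the head, so x = s; the second occurrence is interior since s ≠ u
        subst hP
        simp only [List.nil_append] at hPQ hxPQ hcard'
        -- l = x :: Q? No: A ++ x :: q = x :: Q, with x ∈ Q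
        obtain ⟨B, C, rfl⟩ := List.append_of_mem hxPQ
        -- A ++ x :: q = x :: B ++ x :: C
        have hxs : x = s := by
          rw [hPQ] at hhead; simpa using hhead
        have hC : C ≠ [] := by
          rintro rfl
          rw [hPQ] at hlast
          have hxu : x = u := by
            rw [show x :: (B ++ x :: ([] : List V)) = (x :: B) ++ x :: [] from by simp,
              List.getLast?_append_cons] at hlast
            simpa using hlast
          exact hsu (hxs ▸ hxu)
        have hform : A ++ x :: q = (x :: B) ++ x :: C := by simpa using hPQ
        refine step (x :: B) x C hform (by simp) hC ?_
        have : ((x :: B) ++ C).toFinset = (x :: (B ++ x :: C)).toFinset := by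
          ext v
          simp only [List.toFinset_append, List.toFinset_cons, Finset.mem_union,
            Finset.mem_insert, List.mem_toFinset, List.mem_append, List.mem_cons]
          tauto
        rw [this]
        calc k ≤ (B ++ x :: C).toFinset.card := hcard'
          _ ≤ (x :: (B ++ x :: C)).toFinset.card := by
              apply Finset.card_le_card; intro v; simp only [List.toFinset_cons,
                Finset.mem_insert, List.mem_toFinset]; tauto
      · exact step P x Q hPQ hP hQne hcard'
end
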